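/- Let H be the Heisenberg Lie algebra with basis {x_k : k ∈ ℤ \ {0}} ∪ {c}, brackets [x_k, x_l] = δ_{k+l,0}·k·c and c central. Fix 0 ≠ a ∈ ℂ and let M⁺(a) be the induced module U(H) ⊗_{U(H⁺ ⊕ ℂc)} ℂv_a, where H⁺ = span{x_k : k ≥ 1}, x_k·v_a = 0 for k ≥ 1, and c·v_a = a·v_a. Then M⁺(a) is an irreducible H-module. -/

import Mathlib

open MvPolynomial

private lemma coeff_pderiv' (k : ℕ) (m : ℕ →₀ ℕ) (p : MvPolynomial ℕ ℂ) :
    coeff m (pderiv k p) = ((m k : ℂ) + 1) * coeff (m + Finsupp.single k 1) p := by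
  induction p using MvPolynomial.induction_on' with
  | monomial s c =>
    rw [pderiv_monomial, coeff_monomial, coeff_monomial]
    by_cases h : s = m + Finsupp.single k 1
    · subst h
      have h1 : ((m + Finsupp.single k 1) - Finsupp.single k 1 : ℕ →₀ ℕ) = m :=
        by ext j; simp
      have h2 : ((m + Finsupp.single k 1 : ℕ →₀ ℕ)) k = m k + 1 := by
        simp [Finsupp.add_apply, Finsupp.single_apply]
      rw [if_pos h1, if_pos rfl, h2]
      push_cast; ring
    · rw [if_neg h, mul_zero]
      by_cases h' : (s - Finsupp.single k 1 : ℕ →₀ ℕ) = m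
      · rw [if_pos h']
        have hk : s k = 0 := by
          by_contra hk
          have hle : Finsupp.single k 1 ≤ s :=
            Finsupp.single_le_iff.mpr (Nat.one_le_iff_ne_zero.mpr hk)
          exact h (by rw [← h', tsub_add_cancel_of_le hle])
        simp [hk]
      · rw [if_neg h']
  | add p q hp hq =>
    simp only [map_add, coeff_add, hp, hq]; ring

private lemma top_of_one_mem (W : Submodule ℂ (MvPolynomial ℕ ℂ))
    (hmul : ∀ k : ℕ, ∀ p ∈ W, X k * p ∈ W) (h1 : (1 : MvPolynomial ℕ ℂ) ∈ W) :
    W = ⊤ := by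
  rw [eq_top_iff]
  rintro p -
  induction p using MvPolynomial.induction_on with
  | C c =>
    have := W.smul_mem c h1
    rwa [smul_eq_C_mul, mul_one] at this
  | add p q hp hq => exact W.add_mem hp hq
  | mul_X p n hp => simpa [mul_comm] using hmul n p hp

theorem heisenberg_highest_weight_module_irreducible
    (a : ℂ) (ha : a ≠ 0) (W : Submodule ℂ (MvPolynomial ℕ ℂ))
    (hmul : ∀ k : ℕ, ∀ p ∈ W, X k * p ∈ W)
    (hder : ∀ k : ℕ, ∀ p ∈ W, (a * ((k : ℂ) + 1)) • pderiv k p ∈ W)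
    (hcen : ∀ p ∈ W, a • p ∈ W)
    (hW : W ≠ ⊥) : W = ⊤ := by
  have hder' : ∀ k : ℕ, ∀ p ∈ W, pderiv k p ∈ W := by
    intro k p hp
    have hne : (a * ((k : ℂ) + 1)) ≠ 0 := mul_ne_zero ha (Nat.cast_add_one_ne_zero k)
    have := W.smul_mem (a * ((k : ℂ) + 1))⁻¹ (hder k p hp)
    rwa [smul_smul, inv_mul_cancel₀ hne, one_smul] at this
  have key : ∀ n : ℕ, ∀ p : MvPolynomial ℕ ℂ, p ∈ W → p ≠ 0 → p.totalDegree ≤ n →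
      (1 : MvPolynomial ℕ ℂ) ∈ W := by
    intro n
    induction n with
    | zero =>
      intro p hp hp0 hd
      have hd0 : p.totalDegree = 0 := Nat.le_zero.mp hd
      have hC : p = C (coeff 0 p) := by
        ext m
        rw [coeff_C]
        by_cases hm : m = 0
        · subst hm; simp
        · rw [if_neg fun h => hm h.symm]
          by_contra hc
          have hms : m ∈ p.support := mem_support_iff.mpr hc
          have := (totalDegree_eq_zero_iff ℕ p).mp hd0 m hms
          exact hm (Finsupp.ext this)
      have hc0 : coeff 0 p ≠ 0 := fun h => hp0 (by rw [hC, h, map_zero])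
      have h2 := W.smul_mem (coeff 0 p)⁻¹ hp
      nth_rewrite 2 [hC] at h2
      rwa [smul_eq_C_mul, ← C_mul, inv_mul_cancel₀ hc0, C_1] at h2
    | succ n ih =>
      intro p hp hp0 hd
      by_cases hdn : p.totalDegree ≤ n
      · exact ih p hp hp0 hdn
      have : ¬ ∀ m ∈ p.support, ∀ x, m x = 0 := by
        intro h
        exact absurd ((totalDegree_eq_zero_iff ℕ p).mpr h) (by omega)
      push_neg at this
      obtain ⟨d, hd_mem, k, hk⟩ := this
      set q := pderiv k p with hq
      have hq_mem : q ∈ W := hder' k p hp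
      have hq_ne : q ≠ 0 := by
        intro h0
        have hco : coeff (d - Finsupp.single k 1) q = 0 := by rw [h0]; simp
        rw [coeff_pderiv'] at hco
        have hle : Finsupp.single k 1 ≤ d :=
          Finsupp.single_le_iff.mpr (Nat.one_le_iff_ne_zero.mpr hk)
        rw [tsub_add_cancel_of_le hle] at hco
        rcases mul_eq_zero.mp hco with h | h
        · exact Nat.cast_add_one_ne_zero _ h
        · exact (mem_support_iff.mp hd_mem) h
      have hq_deg : q.totalDegree ≤ n := by
        apply Finset.sup_le
        intro m hm
        have hcm : coeff m q ≠ 0 := mem_support_iff.mp hm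
        rw [coeff_pderiv'] at hcm
        have hmem : m + Finsupp.single k 1 ∈ p.support := by
          rw [mem_support_iff]
          intro h; exact hcm (by rw [h, mul_zero])
        have hle : (m + Finsupp.single k 1).sum (fun _ e => e) ≤ n + 1 :=
          (le_totalDegree hmem).trans hd
        have hsum : (m + Finsupp.single k 1).sum (fun _ e => e) =
            m.sum (fun _ e => e) + 1 := by
          rw [Finsupp.sum_add_index' (fun _ => rfl) (fun _ _ _ => rfl)]
          simp
        omega
      exact ih q hq_mem hq_ne hq_deg
  obtain ⟨p, hp, hp0⟩ := Submodule.exists_mem_ne_zero_of_ne_bot hW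
  exact top_of_one_mem W hmul (key p.totalDegree p hp hp0 le_rfl)
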